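/- Let n > 2, let D = (D₁,...,D_m) be an m-tuple of n×n real diagonal matrices (viewed as Hermitian matrices), and let L : (H_n)^m → ℝ³ be a linear map. Then there exists a unitary matrix V ∈ U_n such that the set E_L(D,V) := { L(V*T*_{θ,φ} D₁ T_{θ,φ} V, ..., V*T*_{θ,φ} D_m T_{θ,φ} V) : θ ∈ [0,π], φ ∈ [0,2π] } is contained in an affine plane of ℝ³ (i.e., there exist a nonzero vector w ∈ ℝ³ and c ∈ ℝ with ⟨w, y⟩ = c for all y ∈ E_L(D,V)). -/

import Mathlib

open Matrix


/-- The unitary matrix `T_{θ,φ}` whose leading 2×2 block is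
`[[cos θ, sin θ · e^{iφ}], [−sin θ, cos θ · e^{iφ}]]` and which is the identity elsewhere. -/
noncomputable def Tmat (n : ℕ) (θ φ : ℝ) : Matrix (Fin n) (Fin n) ℂ :=
  Matrix.of fun i j =>
    if (i : ℕ) = 0 ∧ (j : ℕ) = 0 then (Real.cos θ : ℂ)
    else if (i : ℕ) = 0 ∧ (j : ℕ) = 1 then (Real.sin θ : ℂ) * Complex.exp (Complex.I * φ)
    else if (i : ℕ) = 1 ∧ (j : ℕ) = 0 then -(Real.sin θ : ℂ)
    else if (i : ℕ) = 1 ∧ (j : ℕ) = 1 then (Real.cos θ : ℂ) * Complex.exp (Complex.I * φ)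
    else if i = j then 1 else 0

/-- The set `E_L(D,U) = { L(U*T*_{θ,φ}D₁T_{θ,φ}U, ..., U*T*_{θ,φ}D_mT_{θ,φ}U) :
θ ∈ [0,π], φ ∈ [0,2π] }`. -/
noncomputable def Eset {n m : ℕ}
    (L : (Fin m → Matrix (Fin n) (Fin n) ℂ) →ₗ[ℝ] (Fin 3 → ℝ))
    (D : Fin m → Matrix (Fin n) (Fin n) ℂ)
    (U : Matrix (Fin n) (Fin n) ℂ) : Set (Fin 3 → ℝ) :=
  {y | ∃ θ ∈ Set.Icc (0 : ℝ) Real.pi, ∃ φ ∈ Set.Icc (0 : ℝ) (2 * Real.pi),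
    y = L fun i => Uᴴ * (Tmat n θ φ)ᴴ * D i * Tmat n θ φ * U}

private lemma conj_std {n : ℕ} (V : Matrix (Fin n) (Fin n) ℂ) (a b : Fin n) (z : ℂ) :
    Vᴴ * Matrix.single a b z * V = z • vecMulVec (star (V a)) (V b) := by
  ext j k
  simp [Matrix.mul_apply, Matrix.single, vecMulVec_apply, ite_and,
    Finset.sum_ite_eq, Finset.sum_ite_eq']
  ring

private lemma exists_hermitian_rep {n : ℕ} (ψ : Matrix (Fin n) (Fin n) ℂ →ₗ[ℝ] ℝ) :
    ∃ H : Matrix (Fin n) (Fin n) ℂ, H.IsHermitian ∧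
      ∀ f : Fin n → ℂ, ψ (vecMulVec f (star f)) = (star f ⬝ᵥ H *ᵥ f).re := by
  set a : Fin n → Fin n → ℝ := fun j k => ψ (Matrix.single j k (1:ℂ)) with ha
  set bb : Fin n → Fin n → ℝ := fun j k => ψ (Matrix.single j k Complex.I) with hbb
  refine ⟨Matrix.of fun j k => (((a j k + a k j)/2 : ℝ) : ℂ) + (((bb j k - bb k j)/2 : ℝ) : ℂ) * Complex.I, ?_, ?_⟩
  · ext j k
    simp [Matrix.conjTranspose_apply, Complex.ext_iff]
    constructor <;> ring
  · intro f
    have hdec : vecMulVec f (star f) = ∑ j : Fin n, ∑ k : Fin n,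
        ((f j * star (f k)).re • Matrix.single j k (1:ℂ)
          + (f j * star (f k)).im • Matrix.single j k Complex.I) := by
      ext p q
      simp [vecMulVec_apply, Matrix.sum_apply, Matrix.single, ite_and,
        Finset.sum_add_distrib, Finset.sum_ite_eq, Finset.sum_ite_eq']
      simp [Complex.ext_iff]
    have hψ : ψ (vecMulVec f (star f)) = ∑ j : Fin n, ∑ k : Fin n,
        ((f j * star (f k)).re * a j k + (f j * star (f k)).im * bb j k) := by
      rw [hdec, map_sum]
      refine Finset.sum_congr rfl fun j _ => ?_
      rw [map_sum]
      refine Finset.sum_congr rfl fun k _ => ?_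
      rw [map_add, LinearMap.map_smul, LinearMap.map_smul, smul_eq_mul, smul_eq_mul]
    rw [hψ]
    have hdot : (star f ⬝ᵥ (Matrix.of fun j k => (((a j k + a k j)/2 : ℝ) : ℂ)
        + (((bb j k - bb k j)/2 : ℝ) : ℂ) * Complex.I) *ᵥ f).re
        = ∑ j : Fin n, ∑ k : Fin n, (star (f j) * (((((a j k + a k j)/2 : ℝ) : ℂ)
          + (((bb j k - bb k j)/2 : ℝ) : ℂ) * Complex.I) * f k)).re := by
      simp [dotProduct, Matrix.mulVec, Complex.re_sum, Finset.mul_sum]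
    rw [hdot]
    have key : ∀ j k : Fin n, (star (f j) * (((((a j k + a k j)/2 : ℝ) : ℂ)
          + (((bb j k - bb k j)/2 : ℝ) : ℂ) * Complex.I) * f k)).re
        = ((f j * star (f k)).re * a j k + (f j * star (f k)).im * bb j k) / 2
          + ((f k * star (f j)).re * a k j + (f k * star (f j)).im * bb k j) / 2 := by
      intro j k
      simp [Complex.mul_re, Complex.mul_im]
      ring
    simp only [key]
    have gen : ∀ (G : Fin n → Fin n → ℝ),
        ∑ j : Fin n, ∑ k : Fin n, (G j k / 2 + G k j / 2) = ∑ j : Fin n, ∑ k : Fin n, G j k := by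
      intro G
      rw [Finset.sum_congr rfl (fun j _ => Finset.sum_add_distrib), Finset.sum_add_distrib,
        Finset.sum_comm (f := fun j k => G k j / 2)]
      rw [← Finset.sum_add_distrib]
      refine Finset.sum_congr rfl fun j _ => ?_
      rw [← Finset.sum_add_distrib]
      exact Finset.sum_congr rfl fun k _ => by ring
    exact (gen fun j k => ((f j * star (f k)).re * a j k + (f j * star (f k)).im * bb j k)).symm

noncomputable def Pmat (n : ℕ) : Matrix (Fin n) (Fin n) ℂ :=
  Matrix.of fun j k => if (j:ℕ) = 0 ∧ (k:ℕ) = 0 then 1 else if (j:ℕ) = 1 ∧ (k:ℕ) = 1 then -1 else 0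

noncomputable def Qmat (n : ℕ) : Matrix (Fin n) (Fin n) ℂ :=
  Matrix.of fun j k => if (j:ℕ) = 0 ∧ (k:ℕ) = 1 then 1 else if (j:ℕ) = 1 ∧ (k:ℕ) = 0 then 1 else 0

noncomputable def Rmat (n : ℕ) : Matrix (Fin n) (Fin n) ℂ :=
  Matrix.of fun j k => if (j:ℕ) = 0 ∧ (k:ℕ) = 1 then Complex.I
    else if (j:ℕ) = 1 ∧ (k:ℕ) = 0 then -Complex.I else 0

private lemma Tmat_decomp {n : ℕ} (hn : 2 < n) (i0 i1 : Fin n) (hv0 : (i0:ℕ) = 0)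
    (hv1 : (i1:ℕ) = 1) (θ φ : ℝ) (dv : Fin n → ℝ) :
    (Tmat n θ φ)ᴴ * Matrix.diagonal (fun j => (dv j : ℂ)) * Tmat n θ φ
      = Matrix.diagonal (fun j => (dv j : ℂ))
        + (-(Real.sin θ)^2 * (dv i0 - dv i1)) • Pmat n
        + (Real.cos θ * Real.sin θ * Real.cos φ * (dv i0 - dv i1)) • Qmat n
        + (Real.cos θ * Real.sin θ * Real.sin φ * (dv i0 - dv i1)) • Rmat n := by
  have h0 : 0 < n := by omega
  have h1 : 1 < n := by omega
  have e0 : i0 = ⟨0, h0⟩ := by apply Fin.ext; simpa using hv0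
  have e1 : i1 = ⟨1, h1⟩ := by apply Fin.ext; simpa using hv1
  subst e0; subst e1
  set i0 : Fin n := ⟨0, h0⟩ with hi0
  set i1 : Fin n := ⟨1, h1⟩ with hi1
  have hne : i0 ≠ i1 := by simp [hi0, hi1, Fin.ext_iff]
  have hE : Complex.exp (Complex.I * (φ:ℂ)) = (Real.cos φ : ℂ) + (Real.sin φ : ℂ) * Complex.I := by
    rw [mul_comm, Complex.exp_mul_I, Complex.ofReal_cos, Complex.ofReal_sin]
  have hst : (Real.sin θ:ℂ)^2 + (Real.cos θ:ℂ)^2 = 1 := by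
    exact_mod_cast congrArg (Complex.ofReal) (Real.sin_sq_add_cos_sq θ)
  have hsp : (Real.sin φ:ℂ)^2 + (Real.cos φ:ℂ)^2 = 1 := by
    exact_mod_cast congrArg (Complex.ofReal) (Real.sin_sq_add_cos_sq φ)
  ext j k
  have hL : ((Tmat n θ φ)ᴴ * Matrix.diagonal (fun j => (dv j : ℂ)) * Tmat n θ φ) j k
      = ∑ p : Fin n, star (Tmat n θ φ p j) * ((dv p : ℂ) * Tmat n θ φ p k) := by
    rw [Matrix.mul_assoc, Matrix.mul_apply]
    simp [Matrix.conjTranspose_apply, Matrix.diagonal_mul]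
  rw [hL]
  have hsplit : ∑ p : Fin n, star (Tmat n θ φ p j) * ((dv p : ℂ) * Tmat n θ φ p k)
      = star (Tmat n θ φ i0 j) * ((dv i0 : ℂ) * Tmat n θ φ i0 k)
        + star (Tmat n θ φ i1 j) * ((dv i1 : ℂ) * Tmat n θ φ i1 k)
        + ∑ p ∈ Finset.univ \ {i0, i1}, star (Tmat n θ φ p j) * ((dv p : ℂ) * Tmat n θ φ p k) := by
    rw [← Finset.sum_sdiff (Finset.subset_univ {i0, i1}), Finset.sum_pair hne]
    ring
  rw [hsplit]
  have h3 : ∑ p ∈ Finset.univ \ {i0, i1}, star (Tmat n θ φ p j) * ((dv p : ℂ) * Tmat n θ φ p k)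
      = if j ∈ Finset.univ \ ({i0, i1} : Finset (Fin n)) then (if j = k then (dv j : ℂ) else 0) else 0 := by
    rw [← Finset.sum_ite_eq' (Finset.univ \ {i0, i1}) j (fun p => if p = k then (dv p : ℂ) else 0)]
    refine Finset.sum_congr rfl fun p hp => ?_
    simp only [Finset.mem_sdiff, Finset.mem_insert, Finset.mem_singleton] at hp
    have hp0 : (p:ℕ) ≠ 0 := fun h => hp.2 (Or.inl (Fin.ext h))
    have hp1 : (p:ℕ) ≠ 1 := fun h => hp.2 (Or.inr (Fin.ext h))
    simp only [Tmat, Matrix.of_apply, hp0, hp1, false_and, if_false]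
    split_ifs <;> simp_all
  rw [h3]
  have hv0 : (i0:ℕ) = 0 := rfl
  have hv1 : (i1:ℕ) = 1 := rfl
  have hRHS : (Matrix.diagonal (fun j => (dv j : ℂ))
        + (-(Real.sin θ)^2 * (dv i0 - dv i1)) • Pmat n
        + (Real.cos θ * Real.sin θ * Real.cos φ * (dv i0 - dv i1)) • Qmat n
        + (Real.cos θ * Real.sin θ * Real.sin φ * (dv i0 - dv i1)) • Rmat n) j k
      = (Matrix.diagonal (fun j => (dv j : ℂ))) j k
        + ((-(Real.sin θ)^2 * (dv i0 - dv i1) : ℝ) : ℂ) * Pmat n j k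
        + ((Real.cos θ * Real.sin θ * Real.cos φ * (dv i0 - dv i1) : ℝ) : ℂ) * Qmat n j k
        + ((Real.cos θ * Real.sin θ * Real.sin φ * (dv i0 - dv i1) : ℝ) : ℂ) * Rmat n j k := by
    simp [Complex.real_smul]
  rw [hRHS]
  obtain hj | hj | hj : (j:ℕ) = 0 ∨ (j:ℕ) = 1 ∨ (1 < (j:ℕ)) := by omega
  · have hj' : j = i0 := by apply Fin.ext; simpa using hj
    subst hj'
    obtain hk | hk | hk : (k:ℕ) = 0 ∨ (k:ℕ) = 1 ∨ (1 < (k:ℕ)) := by omega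
    · have hk' : k = i0 := by apply Fin.ext; simpa using hk
      subst hk'
      simp [Tmat, Pmat, Qmat, Rmat, hv0, hv1, hne, hE, Matrix.diagonal_apply]
      simp only [← Complex.ofReal_cos, ← Complex.ofReal_sin, _root_.map_mul, _root_.map_add, _root_.map_neg,
        Complex.conj_ofReal, Complex.conj_I]
      linear_combination (dv i0 : ℂ) * hst
    · have hk' : k = i1 := by apply Fin.ext; simpa using hk
      subst hk'
      simp [Tmat, Pmat, Qmat, Rmat, hv0, hv1, hne, hne.symm, hE, Matrix.diagonal_apply]
      simp only [← Complex.ofReal_cos, ← Complex.ofReal_sin, _root_.map_mul, _root_.map_add, _root_.map_neg,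
        Complex.conj_ofReal, Complex.conj_I]
      ring
    · have hk0 : k ≠ i0 := by simp [Fin.ext_iff, hv0, hv1]; omega
      have hk1 : k ≠ i1 := by simp [Fin.ext_iff, hv0, hv1]; omega
      have hka : (k:ℕ) ≠ 0 := by omega
      have hkb : (k:ℕ) ≠ 1 := by omega
      simp [Tmat, Pmat, Qmat, Rmat, hv0, hv1, hne, hne.symm, hk0, hk1, hka, hkb,
        hk0.symm, hk1.symm, hE, Matrix.diagonal_apply]
  · have hj' : j = i1 := by apply Fin.ext; simpa using hj
    subst hj'
    obtain hk | hk | hk : (k:ℕ) = 0 ∨ (k:ℕ) = 1 ∨ (1 < (k:ℕ)) := by omega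
    · have hk' : k = i0 := by apply Fin.ext; simpa using hk
      subst hk'
      simp [Tmat, Pmat, Qmat, Rmat, hv0, hv1, hne, hne.symm, hE, Matrix.diagonal_apply]
      simp only [← Complex.ofReal_cos, ← Complex.ofReal_sin, _root_.map_mul, _root_.map_add, _root_.map_neg,
        Complex.conj_ofReal, Complex.conj_I]
      ring
    · have hk' : k = i1 := by apply Fin.ext; simpa using hk
      subst hk'
      simp [Tmat, Pmat, Qmat, Rmat, hv0, hv1, hne, hne.symm, hE, Matrix.diagonal_apply]
      simp only [← Complex.ofReal_cos, ← Complex.ofReal_sin, _root_.map_mul, _root_.map_add, _root_.map_neg,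
        Complex.conj_ofReal, Complex.conj_I]
      linear_combination (dv i1:ℂ) * hst
        + ((Real.sin θ:ℂ)^2 * (dv i0:ℂ) + (Real.cos θ:ℂ)^2 * (dv i1:ℂ)) * hsp
        + (-(((Real.sin θ:ℂ)^2 * (dv i0:ℂ) + (Real.cos θ:ℂ)^2 * (dv i1:ℂ)) * (Real.sin φ:ℂ)^2)) * Complex.I_sq
    · have hk0 : k ≠ i0 := by simp [Fin.ext_iff, hv0, hv1]; omega
      have hk1 : k ≠ i1 := by simp [Fin.ext_iff, hv0, hv1]; omega
      have hka : (k:ℕ) ≠ 0 := by omega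
      have hkb : (k:ℕ) ≠ 1 := by omega
      simp [Tmat, Pmat, Qmat, Rmat, hv0, hv1, hne, hne.symm, hk0, hk1, hka, hkb,
        hk0.symm, hk1.symm, hE, Matrix.diagonal_apply]
  · have hj0 : j ≠ i0 := by simp [Fin.ext_iff, hv0, hv1]; omega
    have hj1 : j ≠ i1 := by simp [Fin.ext_iff, hv0, hv1]; omega
    have hja : (j:ℕ) ≠ 0 := by omega
    have hjb : (j:ℕ) ≠ 1 := by omega
    simp [Tmat, Pmat, Qmat, Rmat, hv0, hv1, hne, hne.symm, hj0, hj1, hja, hjb,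
      hj0.symm, hj1.symm, hE, Matrix.diagonal_apply]


private lemma exists_pair {n : ℕ} (hn : 2 < n) (H : Matrix (Fin n) (Fin n) ℂ) (hH : H.IsHermitian) :
    ∃ f0 f1 : EuclideanSpace ℂ (Fin n), ∃ lb : ℝ,
      star ⇑f0 ⬝ᵥ ⇑f0 = 1 ∧ star ⇑f1 ⬝ᵥ ⇑f1 = 1 ∧ star ⇑f0 ⬝ᵥ ⇑f1 = 0 ∧ star ⇑f1 ⬝ᵥ ⇑f0 = 0 ∧
      star ⇑f0 ⬝ᵥ (H *ᵥ ⇑f0) = (lb:ℂ) ∧ star ⇑f1 ⬝ᵥ (H *ᵥ ⇑f1) = (lb:ℂ) ∧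
      star ⇑f0 ⬝ᵥ (H *ᵥ ⇑f1) = 0 ∧ star ⇑f1 ⬝ᵥ (H *ᵥ ⇑f0) = 0 := by
  set v : Fin n → EuclideanSpace ℂ (Fin n) := fun p => hH.eigenvectorBasis p with hv
  set lam : Fin n → ℝ := hH.eigenvalues with hlam
  have hvdot : ∀ p q, star ⇑(v p) ⬝ᵥ ⇑(v q) = if p = q then (1:ℂ) else 0 := by
    intro p q
    have h := hH.eigenvectorBasis.orthonormal
    rw [orthonormal_iff_ite] at h
    have h2 := h p q
    rw [EuclideanSpace.inner_eq_star_dotProduct, dotProduct_comm] at h2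
    simpa [hv] using h2
  have hvmul : ∀ p, H *ᵥ ⇑(v p) = (lam p : ℂ) • ⇑(v p) := by
    intro p
    rw [hv, hlam]
    rw [hH.mulVec_eigenvectorBasis p]
    funext j
    simp [Complex.real_smul]
  -- sorted indices
  obtain ⟨ia, ib, ic, hab, hbc, hac, hlab, hlbc⟩ :
      ∃ a b c : Fin n, a ≠ b ∧ b ≠ c ∧ a ≠ c ∧ lam a ≤ lam b ∧ lam b ≤ lam c := by
    have h0 : 0 < n := by omega
    have h1 : 1 < n := by omega
    set j0 : Fin n := ⟨0, h0⟩
    set j1 : Fin n := ⟨1, h1⟩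
    set j2 : Fin n := ⟨2, hn⟩
    have e01 : j0 ≠ j1 := by simp [Fin.ext_iff]
    have e12 : j1 ≠ j2 := by simp [Fin.ext_iff, j1, j2]
    have e02 : j0 ≠ j2 := by simp [Fin.ext_iff]
    rcases le_total (lam j0) (lam j1) with h | h <;>
      rcases le_total (lam j1) (lam j2) with h' | h' <;>
        rcases le_total (lam j0) (lam j2) with h'' | h''
    · exact ⟨j0, j1, j2, e01, e12, e02, h, h'⟩
    · exact ⟨j0, j1, j2, e01, e12, e02, h, h'⟩
    · exact ⟨j0, j2, j1, e02, e12.symm, e01, h'', h'⟩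
    · exact ⟨j2, j0, j1, e02.symm, e01, e12.symm, h'', h⟩
    · exact ⟨j1, j0, j2, e01.symm, e02, e12, h, h''⟩
    · exact ⟨j1, j2, j0, e12, e02.symm, e01.symm, h', h''⟩
    · exact ⟨j2, j1, j0, e12.symm, e01.symm, e02.symm, h', h⟩
    · exact ⟨j2, j1, j0, e12.symm, e01.symm, e02.symm, h', h⟩
  set t : ℝ := (lam ib - lam ia) / (lam ic - lam ia) with htdef
  have hacle : lam ia ≤ lam ic := le_trans hlab hlbc
  have ht0 : 0 ≤ t := div_nonneg (by linarith) (by linarith)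
  have ht1 : t ≤ 1 := div_le_one_of_le₀ (by linarith) (by linarith)
  have hco : (1 - t) * lam ia + t * lam ic = lam ib := by
    rcases eq_or_lt_of_le hacle with he | hlt
    · have hba : lam ib = lam ia := le_antisymm (by linarith) hlab
      have : lam ic - lam ia = 0 := by linarith [he]
      rw [htdef, this, div_zero]
      simp [hba]
    · have hc : t * (lam ic - lam ia) = lam ib - lam ia := div_mul_cancel₀ _ (ne_of_gt (by linarith))
      linear_combination hc
  set α : ℝ := Real.sqrt (1 - t) with hαdef
  set β : ℝ := Real.sqrt t with hβdef
  have hα2 : α^2 = 1 - t := Real.sq_sqrt (by linarith)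
  have hβ2 : β^2 = t := Real.sq_sqrt ht0
  have hf1coe : ⇑((α:ℂ) • v ia + (β:ℂ) • v ic) = (α:ℂ) • ⇑(v ia) + (β:ℂ) • ⇑(v ic) := rfl
  have hstarf1 : star ((α:ℂ) • ⇑(v ia) + (β:ℂ) • ⇑(v ic))
      = (α:ℂ) • star ⇑(v ia) + (β:ℂ) • star ⇑(v ic) := by
    rw [star_add, star_smul, star_smul]
    simp [Complex.star_def, Complex.conj_ofReal]
  refine ⟨v ib, (α:ℂ) • v ia + (β:ℂ) • v ic, lam ib, ?_, ?_, ?_, ?_, ?_, ?_, ?_, ?_⟩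
  · simpa using hvdot ib ib
  · rw [hf1coe, hstarf1]
    simp only [add_dotProduct, smul_dotProduct, dotProduct_add,
      dotProduct_smul, hvdot]
    simp [hab, hbc, hac, hab.symm, hbc.symm, hac.symm, smul_eq_mul]
    exact_mod_cast (by linear_combination hα2 + hβ2 : α * α + β * β = 1)
  · rw [hf1coe]
    simp only [dotProduct_add, dotProduct_smul, hvdot]
    simp [hab, hbc, hac, hab.symm, hbc.symm, hac.symm, smul_eq_mul]
  · rw [hf1coe, hstarf1]
    simp only [add_dotProduct, smul_dotProduct, hvdot]
    simp [hab, hbc, hac, hab.symm, hbc.symm, hac.symm, smul_eq_mul]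
  · rw [hvmul ib]
    simp only [dotProduct_smul, hvdot]
    simp
  · rw [hf1coe, hstarf1, Matrix.mulVec_add, Matrix.mulVec_smul, Matrix.mulVec_smul,
      hvmul, hvmul]
    simp only [add_dotProduct, smul_dotProduct, dotProduct_add,
      dotProduct_smul, hvdot]
    simp [hab, hbc, hac, hab.symm, hbc.symm, hac.symm, smul_eq_mul]
    exact_mod_cast (by linear_combination (lam ia) * hα2 + (lam ic) * hβ2 + hco : α * (lam ia * α) + β * (lam ic * β) = lam ib)
  · rw [hf1coe, Matrix.mulVec_add, Matrix.mulVec_smul, Matrix.mulVec_smul, hvmul, hvmul]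
    simp only [dotProduct_add, dotProduct_smul, hvdot]
    simp [hab, hbc, hac, hab.symm, hbc.symm, hac.symm, smul_eq_mul]
  · rw [hvmul ib, hf1coe, hstarf1]
    simp only [add_dotProduct, smul_dotProduct, dotProduct_smul, hvdot]
    simp [hab, hbc, hac, hab.symm, hbc.symm, hac.symm, smul_eq_mul]

private lemma Pstd {n : ℕ} (i0 i1 : Fin n) (hv0 : (i0:ℕ) = 0) (hv1 : (i1:ℕ) = 1) :
    Pmat n = Matrix.single i0 i0 (1:ℂ) - Matrix.single i1 i1 1 := by
  ext p q
  simp only [Pmat, Matrix.single, Matrix.of_apply, Matrix.sub_apply]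
  split_ifs <;> simp_all [Fin.ext_iff] <;> omega

private lemma Qstd {n : ℕ} (i0 i1 : Fin n) (hv0 : (i0:ℕ) = 0) (hv1 : (i1:ℕ) = 1) :
    Qmat n = Matrix.single i0 i1 (1:ℂ) + Matrix.single i1 i0 1 := by
  ext p q
  simp only [Qmat, Matrix.single, Matrix.of_apply, Matrix.add_apply]
  split_ifs <;> simp_all [Fin.ext_iff] <;> omega

private lemma Rstd {n : ℕ} (i0 i1 : Fin n) (hv0 : (i0:ℕ) = 0) (hv1 : (i1:ℕ) = 1) :
    Rmat n = Matrix.single i0 i1 Complex.I + Matrix.single i1 i0 (-Complex.I) := by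
  ext p q
  simp only [Rmat, Matrix.single, Matrix.of_apply, Matrix.add_apply]
  split_ifs <;> simp_all [Fin.ext_iff] <;> omega

private lemma vvQ {n : ℕ} (g0 g1 : Fin n → ℂ) :
    vecMulVec (g0 + g1) (star (g0 + g1))
      = vecMulVec g0 (star g0) + vecMulVec g1 (star g1)
        + (vecMulVec g0 (star g1) + vecMulVec g1 (star g0)) := by
  ext p q
  simp [vecMulVec_apply]
  ring

private lemma vvR {n : ℕ} (g0 g1 : Fin n → ℂ) :
    vecMulVec (g0 + Complex.I • g1) (star (g0 + Complex.I • g1))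
      = vecMulVec g0 (star g0) + vecMulVec g1 (star g1)
        - (Complex.I • vecMulVec g0 (star g1) + (-Complex.I) • vecMulVec g1 (star g0)) := by
  ext p q
  simp [vecMulVec_apply, Complex.star_def]
  ring_nf
  simp [Complex.I_sq]

private lemma exists_good_V {n : ℕ} (hn : 2 < n) (i0 i1 : Fin n) (hv0 : (i0:ℕ) = 0)
    (hv1 : (i1:ℕ) = 1) (ψ : Matrix (Fin n) (Fin n) ℂ →ₗ[ℝ] ℝ) :
    ∃ V ∈ Matrix.unitaryGroup (Fin n) ℂ,
      ψ (Vᴴ * Pmat n * V) = 0 ∧ ψ (Vᴴ * Qmat n * V) = 0 ∧ ψ (Vᴴ * Rmat n * V) = 0 := by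
  have hne : i0 ≠ i1 := by simp [Fin.ext_iff, hv0, hv1]
  obtain ⟨H, hH, hrep⟩ := exists_hermitian_rep ψ
  obtain ⟨f0, f1, lb, hn00, hn11, hn01, hn10, hd00, hd11, hd01, hd10⟩ := exists_pair hn H hH
  -- extend to an orthonormal basis
  have horth : Orthonormal ℂ (Set.restrict {i0, i1} (fun p : Fin n => if p = i0 then f0 else f1)) := by
    rw [orthonormal_iff_ite]
    rintro ⟨x, hx⟩ ⟨y, hy⟩
    simp only [Set.mem_insert_iff, Set.mem_singleton_iff] at hx hy
    have e00 : (inner ℂ f0 f0 : ℂ) = 1 := by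
      rw [EuclideanSpace.inner_eq_star_dotProduct, dotProduct_comm]; exact hn00
    have e11 : (inner ℂ f1 f1 : ℂ) = 1 := by
      rw [EuclideanSpace.inner_eq_star_dotProduct, dotProduct_comm]; exact hn11
    have e01 : (inner ℂ f0 f1 : ℂ) = 0 := by
      rw [EuclideanSpace.inner_eq_star_dotProduct, dotProduct_comm]; exact hn01
    have e10 : (inner ℂ f1 f0 : ℂ) = 0 := by
      rw [EuclideanSpace.inner_eq_star_dotProduct, dotProduct_comm]; exact hn10
    have n00 : ‖f0‖ = 1 := by
      have h := e00; rw [inner_self_eq_norm_sq_to_K] at h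
      exact (pow_eq_one_iff_of_nonneg (norm_nonneg _) two_ne_zero).1 (RCLike.ofReal_injective (K := ℂ) ((RCLike.ofReal_pow _ _).trans (h.trans RCLike.ofReal_one.symm)))
    have n11 : ‖f1‖ = 1 := by
      have h := e11; rw [inner_self_eq_norm_sq_to_K] at h
      exact (pow_eq_one_iff_of_nonneg (norm_nonneg _) two_ne_zero).1 (RCLike.ofReal_injective (K := ℂ) ((RCLike.ofReal_pow _ _).trans (h.trans RCLike.ofReal_one.symm)))
    rcases hx with rfl | rfl <;> rcases hy with rfl | rfl <;>
      simp [Set.restrict, hne, hne.symm, e00, e11, e01, e10, n00, n11, Subtype.ext_iff]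
  obtain ⟨bB, hbB⟩ := horth.exists_orthonormalBasis_extension_of_card_eq (by simp)
  have hb0 : bB i0 = f0 := by simpa using hbB i0 (by simp)
  have hb1 : bB i1 = f1 := by simpa [hne.symm] using hbB i1 (by simp)
  set V : Matrix (Fin n) (Fin n) ℂ := Matrix.of (fun p j => star (⇑(bB p) j)) with hV
  have hrow : ∀ p, star (V p) = ⇑(bB p) := by
    intro p; funext j; simp [hV]
  have hrow' : ∀ p, V p = star ⇑(bB p) := by
    intro p; funext j; simp [hV]
  have hVU : V ∈ Matrix.unitaryGroup (Fin n) ℂ := by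
    rw [Matrix.mem_unitaryGroup_iff]
    ext p q
    have h := bB.orthonormal
    rw [orthonormal_iff_ite] at h
    have h2 := h p q
    rw [EuclideanSpace.inner_eq_star_dotProduct, dotProduct_comm] at h2
    rw [Matrix.mul_apply, Matrix.one_apply, ← h2]
    simp [hV, Matrix.conjTranspose_apply, dotProduct, mul_comm]
  have hPstd := Pstd i0 i1 hv0 hv1
  have hQstd := Qstd i0 i1 hv0 hv1
  have hRstd := Rstd i0 i1 hv0 hv1
  refine ⟨V, hVU, ?_, ?_, ?_⟩
  · have hcP : Vᴴ * Pmat n * V = vecMulVec ⇑f0 (star ⇑f0) - vecMulVec ⇑f1 (star ⇑f1) := by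
      rw [hPstd, Matrix.mul_sub, Matrix.sub_mul, conj_std, conj_std, hrow, hrow, hrow', hrow',
        hb0, hb1]
      simp
    rw [hcP, map_sub, hrep, hrep, hd00, hd11]
    simp
  · have hvv := vvQ (⇑f0) (⇑f1)
    have hcQ : Vᴴ * Qmat n * V = vecMulVec ⇑f0 (star ⇑f1) + vecMulVec ⇑f1 (star ⇑f0) := by
      rw [hQstd, Matrix.mul_add, Matrix.add_mul, conj_std, conj_std, hrow, hrow, hrow', hrow',
        hb0, hb1]
      simp
    have hQ2 : Vᴴ * Qmat n * V = vecMulVec (⇑f0 + ⇑f1) (star (⇑f0 + ⇑f1))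
        - vecMulVec ⇑f0 (star ⇑f0) - vecMulVec ⇑f1 (star ⇑f1) := by
      rw [hvv, hcQ]; abel
    have hdsum : star (⇑f0 + ⇑f1) ⬝ᵥ (H *ᵥ (⇑f0 + ⇑f1)) = 2*(lb:ℂ) := by
      rw [star_add, Matrix.mulVec_add]
      simp only [add_dotProduct, dotProduct_add, hd00, hd11, hd01, hd10]
      ring
    rw [hQ2, map_sub, map_sub, hrep, hrep, hrep, hdsum, hd00, hd11]
    simp
    ring
  · have hg : ⇑f0 + Complex.I • ⇑f1 = ⇑f0 + Complex.I • ⇑f1 := rfl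
    have hstarg : star (⇑f0 + Complex.I • ⇑f1) = star ⇑f0 + (-Complex.I) • star ⇑f1 := by
      rw [star_add, star_smul]
      simp [Complex.star_def]
    have hvv := vvR (⇑f0) (⇑f1)
    have hcR : Vᴴ * Rmat n * V = Complex.I • vecMulVec ⇑f0 (star ⇑f1)
        + (-Complex.I) • vecMulVec ⇑f1 (star ⇑f0) := by
      rw [hRstd, Matrix.mul_add, Matrix.add_mul, conj_std, conj_std, hrow, hrow, hrow', hrow',
        hb0, hb1]
    have hR2 : Vᴴ * Rmat n * V = vecMulVec ⇑f0 (star ⇑f0) + vecMulVec ⇑f1 (star ⇑f1)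
        - vecMulVec (⇑f0 + Complex.I • ⇑f1) (star (⇑f0 + Complex.I • ⇑f1)) := by
      rw [hvv, hcR]; abel
    have hdsum : star (⇑f0 + Complex.I • ⇑f1) ⬝ᵥ (H *ᵥ (⇑f0 + Complex.I • ⇑f1)) = 2*(lb:ℂ) := by
      rw [hstarg, Matrix.mulVec_add, Matrix.mulVec_smul]
      simp only [add_dotProduct, dotProduct_add, smul_dotProduct,
        dotProduct_smul, hd00, hd11, hd01, hd10, smul_eq_mul]
      ring_nf
      rw [Complex.I_sq]
      ring
    rw [hR2, map_sub, map_add, hrep, hrep, hrep, hdsum, hd00, hd11]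
    simp
    ring

/-- For `n > 2` and a tuple of real diagonal matrices `D`, there is a unitary `V` such that
`E_L(D,V)` degenerates, i.e. is contained in an affine plane of `ℝ³`. -/
theorem stmt3 {n m : ℕ} (hn : 2 < n) (d : Fin m → Fin n → ℝ)
    (L : (Fin m → Matrix (Fin n) (Fin n) ℂ) →ₗ[ℝ] (Fin 3 → ℝ)) :
    ∃ V ∈ Matrix.unitaryGroup (Fin n) ℂ, ∃ w : Fin 3 → ℝ, w ≠ 0 ∧ ∃ c : ℝ,
      ∀ y ∈ Eset L (fun i => Matrix.diagonal fun j => (d i j : ℂ)) V,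
        ∑ k, w k * y k = c := by
  have h0 : 0 < n := by omega
  have h1 : 1 < n := by omega
  set i0 : Fin n := ⟨0, h0⟩ with hi0
  set i1 : Fin n := ⟨1, h1⟩ with hi1
  set ψ : Matrix (Fin n) (Fin n) ℂ →ₗ[ℝ] ℝ :=
    (LinearMap.proj (0 : Fin 3)).comp (L.comp
      (LinearMap.pi fun i => (d i i0 - d i i1)
        • (LinearMap.id : Matrix (Fin n) (Fin n) ℂ →ₗ[ℝ] Matrix (Fin n) (Fin n) ℂ))) with hψdef
  have hψ : ∀ X : Matrix (Fin n) (Fin n) ℂ, ψ X = L (fun i => (d i i0 - d i i1) • X) 0 :=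
    fun X => rfl
  obtain ⟨V, hVU, hP, hQ, hR⟩ := exists_good_V hn i0 i1 rfl rfl ψ
  refine ⟨V, hVU, (fun k => if k = 0 then 1 else 0), ?_,
    (L fun i => Vᴴ * (Matrix.diagonal fun j => (d i j : ℂ)) * V) 0, ?_⟩
  · intro h
    have h2 := congrFun h 0
    simp at h2
  · rintro y ⟨θ, hθ, φ, hφ, rfl⟩
    have harg : (fun i => Vᴴ * (Tmat n θ φ)ᴴ * (Matrix.diagonal fun j => (d i j:ℂ)) * Tmat n θ φ * V)
        = (fun i => Vᴴ * (Matrix.diagonal fun j => (d i j:ℂ)) * V)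
          + (-(Real.sin θ)^2) • (fun i => (d i i0 - d i i1) • (Vᴴ * Pmat n * V))
          + (Real.cos θ * Real.sin θ * Real.cos φ) • (fun i => (d i i0 - d i i1) • (Vᴴ * Qmat n * V))
          + (Real.cos θ * Real.sin θ * Real.sin φ) • (fun i => (d i i0 - d i i1) • (Vᴴ * Rmat n * V)) := by
      funext i
      simp only [Pi.add_apply, Pi.smul_apply]
      have e1 : Vᴴ * (Tmat n θ φ)ᴴ * (Matrix.diagonal fun j => (d i j:ℂ)) * Tmat n θ φ * V
          = Vᴴ * ((Tmat n θ φ)ᴴ * (Matrix.diagonal fun j => (d i j:ℂ)) * Tmat n θ φ) * V := by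
        simp only [Matrix.mul_assoc]
      rw [e1, Tmat_decomp hn i0 i1 rfl rfl θ φ (d i)]
      simp only [Matrix.mul_add, Matrix.add_mul, Matrix.smul_mul, Matrix.mul_smul, mul_smul]
    have key : (L fun i => Vᴴ * (Tmat n θ φ)ᴴ * (Matrix.diagonal fun j => (d i j:ℂ)) * Tmat n θ φ * V) 0
        = (L fun i => Vᴴ * (Matrix.diagonal fun j => (d i j:ℂ)) * V) 0 := by
      rw [harg, map_add, map_add, map_add, _root_.map_smul, _root_.map_smul, _root_.map_smul]
      simp only [Pi.add_apply, Pi.smul_apply, smul_eq_mul]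
      rw [← hψ, ← hψ, ← hψ, hP, hQ, hR]
      ring
    simp [Fin.sum_univ_three, key]
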